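/- The number of 312-avoiding noncommutative crossing partitions of [n] equals the n-th Catalan number. -/

import Mathlib

/-- A noncommutative crossing partition of `[n] = {1,...,n}`: a sequence of blocks such that
every integer in `[n]` appears exactly once, each block is nonempty and strictly increasing,
and `max(π_i) > min(π_{i+1})` for consecutive blocks. -/
def IsNCCP (n : ℕ) (π : List (List ℕ)) : Prop :=
  π.flatten.Perm (List.range' 1 n) ∧
  (∀ b ∈ π, b ≠ [] ∧ b.Pairwise (· < ·)) ∧
  π.Chain' (fun b b' => ∃ x ∈ b, ∃ y ∈ b', y < x)

/-- A word avoids the pattern 312: no positions `i < j < k` with `w_j < w_k < w_i`. -/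
def Avoids312 (w : List ℕ) : Prop :=
  ¬ ∃ i j k : ℕ, i < j ∧ j < k ∧ k < w.length ∧
      w.getD j 0 < w.getD k 0 ∧ w.getD k 0 < w.getD i 0

open List

/-! ### Run decomposition -/

private def splitRuns : List ℕ → List (List ℕ)
  | [] => []
  | [x] => [[x]]
  | x :: y :: l =>
    if x < y then
      match splitRuns (y :: l) with
      | [] => [[x]]
      | b :: bs => (x :: b) :: bs
    else [x] :: splitRuns (y :: l)

private lemma splitRuns_cons : ∀ (l : List ℕ) (x : ℕ),
    ∃ t bs, splitRuns (x :: l) = (x :: t) :: bs := by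
  intro l
  induction l with
  | nil => intro x; exact ⟨[], [], rfl⟩
  | cons y l ih =>
    intro x
    obtain ⟨t, bs, h⟩ := ih y
    by_cases hxy : x < y
    · exact ⟨y :: t, bs, by simp [splitRuns, hxy, h]⟩
    · exact ⟨[], splitRuns (y :: l), by simp [splitRuns, hxy]⟩

private lemma flatten_splitRuns : ∀ (l : List ℕ), (splitRuns l).flatten = l := by
  intro l
  induction l with
  | nil => rfl
  | cons x l ih =>
    cases l with
    | nil => rfl
    | cons y l' =>
      by_cases hxy : x < y
      · obtain ⟨t, bs, h⟩ := splitRuns_cons l' y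
        simp only [splitRuns, if_pos hxy, h]
        have := ih
        rw [h] at this
        simpa using this
      · simp only [splitRuns, if_neg hxy]
        simpa using ih

private lemma splitRuns_blocks : ∀ (l : List ℕ), ∀ b ∈ splitRuns l, b ≠ [] ∧ b.Chain' (· < ·) := by
  intro l
  induction l with
  | nil => simp [splitRuns]
  | cons x l ih =>
    cases l with
    | nil => simp [splitRuns]; exact List.isChain_singleton _
    | cons y l' =>
      by_cases hxy : x < y
      · obtain ⟨t, bs, h⟩ := splitRuns_cons l' y
        simp only [splitRuns, if_pos hxy, h]
        intro b hb
        rcases mem_cons.mp hb with hb | hb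
        · subst hb
          have hyt := ih (y :: t) (by rw [h]; exact mem_cons_self)
          exact ⟨by simp, List.isChain_cons_cons.mpr ⟨hxy, hyt.2⟩⟩
        · exact ih b (by rw [h]; exact mem_cons_of_mem _ hb)
      · simp only [splitRuns, if_neg hxy]
        intro b hb
        rcases mem_cons.mp hb with hb | hb
        · subst hb; exact ⟨by simp, List.isChain_singleton _⟩
        · exact ih b hb

private lemma splitRuns_chain : ∀ (l : List ℕ), l.Nodup →
    (splitRuns l).Chain' (fun b b' => ∃ x ∈ b, ∃ y ∈ b', y < x) := by
  intro l
  induction l with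
  | nil => intro _; exact List.isChain_nil
  | cons x l ih =>
    intro hnd
    cases l with
    | nil => simp [splitRuns]; exact List.isChain_singleton _
    | cons y l' =>
      have hnd' : (y :: l').Nodup := hnd.of_cons
      by_cases hxy : x < y
      · obtain ⟨t, bs, h⟩ := splitRuns_cons l' y
        simp only [splitRuns, if_pos hxy, h]
        have hch := ih hnd'
        rw [h] at hch
        cases bs with
        | nil => exact List.isChain_singleton _
        | cons b2 bs' =>
          refine List.IsChain.cons_cons ?_ hch.tail
          obtain ⟨u, hu, v, hv, hvu⟩ := hch.rel_head
          exact ⟨u, mem_cons_of_mem _ hu, v, hv, hvu⟩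
      · simp only [splitRuns, if_neg hxy]
        obtain ⟨t, bs, h⟩ := splitRuns_cons l' y
        rw [h]
        refine List.IsChain.cons_cons ⟨x, by simp, y, by simp, ?_⟩ (by rw [← h]; exact ih hnd')
        have : x ≠ y := by
          intro he; subst he; exact (nodup_cons.mp hnd).1 (mem_cons_self)
        omega

private lemma splitRuns_append : ∀ (b rest : List ℕ), b ≠ [] → b.Chain' (· < ·) →
    (∀ y ∈ rest.head?, ∀ x ∈ b.getLast?, ¬ x < y) →
    splitRuns (b ++ rest) = b :: splitRuns rest := by
  intro b
  induction b with
  | nil => intro rest h; exact absurd rfl h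
  | cons x b' ih =>
    intro rest _ hch hcond
    cases b' with
    | nil =>
      cases rest with
      | nil => rfl
      | cons y r' =>
        have hxy : ¬ x < y := hcond y rfl x rfl
        simp [splitRuns, hxy]
    | cons x' b'' =>
      have hx : x < x' := hch.rel_head
      have hrec : splitRuns (x' :: (b'' ++ rest)) = (x' :: b'') :: splitRuns rest := by
        have := ih rest (by simp) hch.tail ?_
        · simpa using this
        · intro y hy z hz
          refine hcond y hy z ?_
          rw [getLast?_cons_cons]
          exact hz
      show splitRuns (x :: x' :: (b'' ++ rest)) = _
      simp only [splitRuns, if_pos hx]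
      rw [hrec]

private lemma chain'_head_le : ∀ (l : List ℕ), l.Chain' (· < ·) → ∀ z x : ℕ,
    l.head? = some z → x ∈ l → z ≤ x := by
  intro l
  induction l with
  | nil => intro _ z x hz; simp at hz
  | cons a l ih =>
    intro h z x hz hx
    simp only [head?_cons, Option.some.injEq] at hz
    subst hz
    rcases mem_cons.mp hx with rfl | hx
    · exact le_refl _
    · rcases l with _ | ⟨b, l'⟩
      · simp at hx
      · have hb : a < b := h.rel_head
        have := ih h.tail b x rfl hx
        omega

private lemma chain'_le_getLast : ∀ (l : List ℕ), l.Chain' (· < ·) → ∀ z x : ℕ,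
    l.getLast? = some z → x ∈ l → x ≤ z := by
  intro l
  induction l with
  | nil => intro _ z x _ hx; simp at hx
  | cons a l ih =>
    intro h z x hz hx
    rcases l with _ | ⟨b, l'⟩
    · simp at hz hx; omega
    · rw [getLast?_cons_cons] at hz
      have hb : a < b := h.rel_head
      have hbz : b ≤ z := ih h.tail z b hz (mem_cons_self)
      rcases mem_cons.mp hx with rfl | hx
      · omega
      · exact ih h.tail z x hz hx

private lemma splitRuns_flatten_eq : ∀ (π : List (List ℕ)),
    (∀ b ∈ π, b ≠ [] ∧ b.Chain' (· < ·)) →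
    π.Chain' (fun b b' => ∃ x ∈ b, ∃ y ∈ b', y < x) →
    splitRuns π.flatten = π := by
  intro π
  induction π with
  | nil => intro _ _; rfl
  | cons b π' ih
 =>
    intro hb hch
    have hb1 := hb b (mem_cons_self)
    have hrest : splitRuns π'.flatten = π' :=
      ih (fun c hc => hb c (mem_cons_of_mem _ hc)) hch.tail
    have : (b :: π').flatten = b ++ π'.flatten := by simp
    rw [this, splitRuns_append b π'.flatten hb1.1 hb1.2 ?_, hrest]
    intro y hy z hz hlt
    -- y is head of π'.flatten, z is last of b; need ¬ z < y
    cases π' with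
    | nil => simp at hy
    | cons b2 π'' =>
      obtain ⟨u, hu, v, hv, hvu⟩ := hch.rel_head
      -- u ∈ b, v ∈ b2, v < u
      have hz' : u ≤ z := chain'_le_getLast b hb1.2 z u hz hu
      have hb2 := hb b2 (by simp)
      -- y = head of b2 ++ ... flatten; b2 ≠ []
      have hy' : (b2 :: π'').flatten.head? = some y := hy
      have : b2.head? = some y := by
        rcases b2 with _ | ⟨w, b2'⟩
        · exact absurd rfl hb2.1
        · simpa using hy'
      have := chain'_head_le b2 hb2.2 y v this hv
      omega

/-! ### Counting 312-avoiding permutations of an interval -/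

open scoped Classical in
private noncomputable def ACat (a n : ℕ) : Finset (List ℕ) :=
  ((List.range' a n).permutations.toFinset).filter fun w => Avoids312 w

private lemma mem_ACat {a n : ℕ} {w : List ℕ} :
    w ∈ ACat a n ↔ w.Perm (List.range' a n) ∧ Avoids312 w := by
  simp [ACat, List.mem_permutations]

private lemma avoids_nil : Avoids312 [] := by
  rintro ⟨i, j, k, _, _, hk, _⟩
  simp at hk

private lemma getD_left (A B : List ℕ) (a : ℕ) {m : ℕ} (h : m < A.length) :
    (A ++ a :: B).getD m 0 = A.getD m 0 ∧ A.getD m 0 ∈ A := by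
  refine ⟨List.getD_append _ _ _ _ h, ?_⟩
  rw [List.getD_eq_getElem _ _ h]
  exact List.getElem_mem h

private lemma getD_mid (A B : List ℕ) (a : ℕ) :
    (A ++ a :: B).getD A.length 0 = a := by
  rw [List.getD_append_right _ _ _ _ (le_refl _)]
  simp

private lemma getD_right (A B : List ℕ) (a : ℕ) {m : ℕ} (h : A.length < m)
    (h2 : m < (A ++ a :: B).length) :
    (A ++ a :: B).getD m 0 = B.getD (m - A.length - 1) 0 ∧
      B.getD (m - A.length - 1) 0 ∈ B := by
  have hml : m - A.length - 1 < B.length := by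
    simp only [List.length_append, List.length_cons] at h2; omega
  constructor
  · rw [List.getD_append_right _ _ _ _ (le_of_lt h)]
    have : m - A.length = (m - A.length - 1) + 1 := by omega
    rw [this]
    simp
  · rw [List.getD_eq_getElem _ _ hml]
    exact List.getElem_mem hml

private lemma avoids_left {A l : List ℕ} (h : Avoids312 (A ++ l)) : Avoids312 A := by
  rintro ⟨i, j, k, hij, hjk, hk, h1, h2⟩
  refine h ⟨i, j, k, hij, hjk, by simp; omega, ?_, ?_⟩
  · rw [List.getD_append _ _ _ _ (show j < A.length by omega),
      List.getD_append _ _ _ _ (show k < A.length by omega)]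
    exact h1
  · rw [List.getD_append _ _ _ _ (show k < A.length by omega),
      List.getD_append _ _ _ _ (show i < A.length by omega)]
    exact h2

private lemma avoids_right {A B : List ℕ} {a : ℕ} (h : Avoids312 (A ++ a :: B)) :
    Avoids312 B := by
  rintro ⟨i, j, k, hij, hjk, hk, h1, h2⟩
  set la := A.length
  have hlen : (A ++ a :: B).length = la + 1 + B.length := by simp; omega
  have key : ∀ m, m < B.length → (A ++ a :: B).getD (la + 1 + m) 0 = B.getD m 0 := by
    intro m hm
    rw [List.getD_append_right _ _ _ _ (by omega)]
    have : la + 1 + m - la = m + 1 := by omega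
    rw [this]
    simp
  refine h ⟨la + 1 + i, la + 1 + j, la + 1 + k, by omega, by omega, by omega, ?_, ?_⟩
  · rw [key j (by omega), key k (by omega)]; exact h1
  · rw [key k (by omega), key i (by omega)]; exact h2

private lemma avoids_join {A B : List ℕ} {a p : ℕ}
    (hA : ∀ x ∈ A, a < x ∧ x ≤ a + p) (hB : ∀ y ∈ B, a + p < y)
    (h1 : Avoids312 A) (h2 : Avoids312 B) : Avoids312 (A ++ a :: B) := by
  rintro ⟨i, j, k, hij, hjk, hk, hp1, hp2⟩
  set la := A.length with hla
  have hlen : (A ++ a :: B).length = la + 1 + B.length := by simp; omega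
  rcases lt_trichotomy i la with hi | hi | hi
  · rcases lt_trichotomy j la with hj | hj | hj
    · rcases lt_trichotomy k la with hk' | hk' | hk'
      · -- all in A
        refine h1 ⟨i, j, k, hij, hjk, hk', ?_, ?_⟩
        · rw [← (getD_left A B a hj).1, ← (getD_left A B a hk').1]; exact hp1
        · rw [← (getD_left A B a hk').1, ← (getD_left A B a hi).1]; exact hp2
      · -- k = la : w_k = a, but w_j ∈ A so a < w_j, contradicting w_j < w_k = a
        subst hk'
        rw [getD_mid] at hp1
        have := (hA _ (getD_left A B a hj).2).1
        rw [(getD_left A B a hj).1] at hp1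
        omega
      · -- k in B : w_k > a+p ≥ w_i
        have hkB := getD_right A B a hk' hk
        have := hB _ hkB.2
        have hiA := getD_left A B a hi
        have := (hA _ hiA.2).2
        rw [hkB.1] at hp2
        rw [hiA.1] at hp2
        omega
    · -- j = la : w_j = a; k > la so w_k ∈ B, w_k > a + p ≥ w_i
      subst hj
      have hkB := getD_right A B a hjk hk
      have := hB _ hkB.2
      have hiA := getD_left A B a hi
      have := (hA _ hiA.2).2
      rw [hkB.1] at hp2
      rw [hiA.1] at hp2
      omega
    · -- j in B : w_j > a + p ≥ w_i but w_j < w_k < w_i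
      have hjB := getD_right A B a hj (by omega)
      have := hB _ hjB.2
      have hiA := getD_left A B a hi
      have := (hA _ hiA.2).2
      rw [hjB.1] at hp1
      have hkB := getD_right A B a (by omega : la < k) hk
      have := hB _ hkB.2
      rw [hkB.1] at hp1 hp2
      rw [hiA.1] at hp2
      omega
  · -- i = la : w_i = a; w_k ∈ B so w_k > a = w_i, contradicting w_k < w_i
    subst hi
    rw [getD_mid] at hp2
    have hkB := getD_right A B a (by omega : la < k) hk
    have := hB _ hkB.2
    rw [hkB.1] at hp2
    omega
  · -- all in B
    have hiB := getD_right A B a hi (by omega)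
    have hjB := getD_right A B a (by omega : la < j) (by omega)
    have hkB := getD_right A B a (by omega : la < k) hk
    refine h2 ⟨i - la - 1, j - la - 1, k - la - 1, by omega, by omega, by omega, ?_, ?_⟩
    · rw [← hjB.1, ← hkB.1]; exact hp1
    · rw [← hkB.1, ← hiB.1]; exact hp2

private lemma append_cons_inj {a : ℕ} : ∀ {A₁ A₂ B₁ B₂ : List ℕ}, a ∉ A₁ → a ∉ A₂ →
    A₁ ++ a :: B₁ = A₂ ++ a :: B₂ → A₁ = A₂ ∧ B₁ = B₂ := by
  intro A₁
  induction A₁ with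
  | nil =>
    intro A₂ B₁ B₂ _ h2 he
    cases A₂ with
    | nil => simpa using he
    | cons x A₂' =>
      simp only [nil_append, cons_append, cons.injEq] at he
      exact absurd (he.1 ▸ mem_cons_self) h2
  | cons x A₁' ih =>
    intro A₂ B₁ B₂ h1 h2 he
    cases A₂ with
    | nil =>
      simp only [nil_append, cons_append, cons.injEq] at he
      exact absurd (he.1 ▸ mem_cons_self) (he.1 ▸ h1)
    | cons y A₂' =>
      simp only [cons_append, cons.injEq] at he
      obtain ⟨rfl, he2⟩ := he
      have := ih (fun h => h1 (mem_cons_of_mem _ h)) (fun h => h2 (mem_cons_of_mem _ h)) he2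
      exact ⟨by rw [this.1], this.2⟩

private lemma split_bounds {A B : List ℕ} {s n : ℕ} (h : (A ++ B).Perm (List.range' s n))
    (hlt : ∀ x ∈ A, ∀ y ∈ B, x < y) :
    (∀ x ∈ A, x < s + A.length) ∧ (∀ y ∈ B, s + A.length ≤ y) := by
  classical
  have hnd : (A ++ B).Nodup := h.symm.nodup (List.nodup_range' (s := s) (n := n))
  have hndA : A.Nodup := hnd.of_append_left
  have hndB : B.Nodup := hnd.of_append_right
  have hlensum : A.length + B.length = n := by
    have := h.length_eq; simpa using this
  have hmem : ∀ x ∈ A ++ B, s ≤ x ∧ x < s + n := by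
    intro x hx
    exact List.mem_range'_1.mp (h.subset hx)
  constructor
  · intro x hx
    have hBsub : B.toFinset ⊆ Finset.Ico (x + 1) (s + n) := by
      intro y hy
      rw [List.mem_toFinset] at hy
      have := hlt x hx y hy
      have := (hmem y (mem_append_right _ hy)).2
      simp only [Finset.mem_Ico]; omega
    have hcard := Finset.card_le_card hBsub
    rw [List.toFinset_card_of_nodup hndB, Nat.card_Ico] at hcard
    have h1 := (hmem x (mem_append_left _ hx)).1
    have h2 := (hmem x (mem_append_left _ hx)).2
    omega
  · intro y hy
    have hAsub : A.toFinset ⊆ Finset.Ico s y := by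
      intro x hx
      rw [List.mem_toFinset] at hx
      have := hlt x hx y hy
      have := (hmem x (mem_append_left _ hx)).1
      simp only [Finset.mem_Ico]; omega
    have hcard := Finset.card_le_card hAsub
    rw [List.toFinset_card_of_nodup hndA, Nat.card_Ico] at hcard
    have := (hmem y (mem_append_right _ hy)).1
    omega

private lemma split_perm {A B : List ℕ} {s n : ℕ} (h : (A ++ B).Perm (List.range' s n))
    (hlt : ∀ x ∈ A, ∀ y ∈ B, x < y) :
    A.Perm (List.range' s A.length) ∧ B.Perm (List.range' (s + A.length) (n - A.length)) ∧
      A.length ≤ n := by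
  classical
  obtain ⟨hAb, hBb⟩ := split_bounds h hlt
  have hlensum : A.length + B.length = n := by
    have := h.length_eq; simpa using this
  have hsplit : List.range' s A.length ++ List.range' (s + A.length) (n - A.length) =
      List.range' s n := by
    have := List.range'_append (s := s) (m := A.length) (n := n - A.length) (step := 1)
    simp only [one_mul] at this
    rw [this]
    congr 1
    omega
  set p : ℕ → Bool := fun x => decide (x < s + A.length) with hp
  have hfilter := h.filter p
  have hfA : (A ++ B).filter p = A := by
    rw [List.filter_append]
    have h1 : A.filter p = A := List.filter_eq_self.mpr fun x hx => decide_eq_true (hAb x hx)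
    have h2 : B.filter p = [] := List.filter_eq_nil_iff.mpr fun y hy => by
      simp only [hp, decide_eq_true_eq]
      have := hBb y hy; omega
    rw [h1, h2, List.append_nil]
  have hfR : (List.range' s n).filter p = List.range' s A.length := by
    rw [← hsplit, List.filter_append]
    have h1 : (List.range' s A.length).filter p = List.range' s A.length :=
      List.filter_eq_self.mpr fun x hx => by
        have := List.mem_range'_1.mp hx
        simp only [hp, decide_eq_true_eq]; omega
    have h2 : (List.range' (s + A.length) (n - A.length)).filter p = [] :=
      List.filter_eq_nil_iff.mpr fun y hy => by
        have := List.mem_range'_1.mp hy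
        simp only [hp, decide_eq_true_eq]; omega
    rw [h1, h2, List.append_nil]
  have hApe : A.Perm (List.range' s A.length) := by rwa [hfA, hfR] at hfilter
  set q : ℕ → Bool := fun x => decide (¬ x < s + A.length) with hq
  have hfilterq := h.filter q
  have hfB : (A ++ B).filter q = B := by
    rw [List.filter_append]
    have h1 : A.filter q = [] := List.filter_eq_nil_iff.mpr fun x hx => by
      simp only [hq, decide_eq_true_eq, not_not]
      have := hAb x hx; omega
    have h2 : B.filter q = B := List.filter_eq_self.mpr fun y hy => by
      simp only [hq, decide_eq_true_eq]
      have := hBb y hy; omega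
    rw [h1, h2, List.nil_append]
  have hfRq : (List.range' s n).filter q = List.range' (s + A.length) (n - A.length) := by
    rw [← hsplit, List.filter_append]
    have h1 : (List.range' s A.length).filter q = [] :=
      List.filter_eq_nil_iff.mpr fun x hx => by
        have := List.mem_range'_1.mp hx
        simp only [hq, decide_eq_true_eq, not_not]; omega
    have h2 : (List.range' (s + A.length) (n - A.length)).filter q =
        List.range' (s + A.length) (n - A.length) :=
      List.filter_eq_self.mpr fun y hy => by
        have := List.mem_range'_1.mp hy
        simp only [hq, decide_eq_true_eq]; omega
    rw [h1, h2, List.nil_append]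
  have hBpe : B.Perm (List.range' (s + A.length) (n - A.length)) := by
    rwa [hfB, hfRq] at hfilterq
  exact ⟨hApe, hBpe, by omega⟩

private lemma decomp {a n : ℕ} {w : List ℕ} (hw : w.Perm (List.range' a (n + 1)))
    (hav : Avoids312 w) :
    ∃ i ≤ n, ∃ A B : List ℕ, w = A ++ a :: B ∧ A.length = i ∧
      A.Perm (List.range' (a + 1) i) ∧ B.Perm (List.range' (a + 1 + i) (n - i)) ∧
      Avoids312 A ∧ Avoids312 B := by
  have haw : a ∈ w := hw.symm.subset (by rw [List.range'_succ]; exact mem_cons_self)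
  obtain ⟨A, B, rfl⟩ := List.append_of_mem haw
  have hnd : (A ++ a :: B).Nodup := hw.symm.nodup (List.nodup_range' (s := a) (n := n + 1))
  have hAB : (A ++ B).Perm (List.range' (a + 1) n) := by
    have h1 : (A ++ a :: B).Perm (a :: (A ++ B)) := List.perm_middle.trans (List.Perm.refl _)
    have h2 : (a :: (A ++ B)).Perm (a :: List.range' (a + 1) n) := by
      refine (h1.symm.trans hw).trans ?_
      rw [List.range'_succ]
    exact h2.cons_inv
  have hgt : ∀ x ∈ A ++ B, a < x := by
    intro x hx
    have := List.mem_range'_1.mp (hAB.subset hx)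
    omega
  -- cross inequality from 312-avoidance
  have hlt : ∀ x ∈ A, ∀ y ∈ B, x < y := by
    intro x hx y hy
    obtain ⟨⟨ia, hia⟩, hxa⟩ := List.mem_iff_get.mp hx
    obtain ⟨⟨ib, hib⟩, hyb⟩ := List.mem_iff_get.mp hy
    set la := A.length
    have hw1 : (A ++ a :: B).getD ia 0 = x := by
      rw [(getD_left A B a hia).1, List.getD_eq_getElem _ _ hia]
      exact hxa
    have hw2 : (A ++ a :: B).getD la 0 = a := getD_mid A B a
    have hw3 : (A ++ a :: B).getD (la + 1 + ib) 0 = y := by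
      have hlen : la + 1 + ib < (A ++ a :: B).length := by simp; omega
      rw [(getD_right A B a (by omega) hlen).1]
      have : la + 1 + ib - la - 1 = ib := by omega
      rw [this, List.getD_eq_getElem _ _ hib]
      exact hyb
    have hxy : x ≠ y := by
      intro he
      subst he
      have := List.disjoint_of_nodup_append hnd
      exact this hx (mem_cons_of_mem _ hy)
    by_contra hc
    push_neg at hc
    refine hav ⟨ia, la, la + 1 + ib, hia, by omega, by simp; omega, ?_⟩
    rw [hw1, hw2, hw3]
    have hay : a < y := hgt y (mem_append_right _ hy)
    exact ⟨hay, by omega⟩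
  obtain ⟨hApe, hBpe, hle⟩ := split_perm hAB hlt
  refine ⟨A.length, hle, A, B, rfl, rfl, hApe, ?_, avoids_left hav, avoids_right hav⟩
  convert hBpe using 2

private lemma ACat_card : ∀ n a, (ACat a n).card = catalan n := by
  intro n
  induction n using Nat.strong_induction_on with
  | _ n ih =>
    intro a
    match n with
    | 0 =>
      have : ACat a 0 = {[]} := by
        ext w
        simp only [mem_ACat, Finset.mem_singleton]
        constructor
        · rintro ⟨hp, _⟩
          simpa using hp
        · rintro rfl
          exact ⟨by simp, avoids_nil⟩
      rw [this]
      simp [catalan_zero]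
    | n + 1 =>
      classical
      have hset : ACat a (n + 1) = (Finset.range (n + 1)).biUnion
          (fun i => ((ACat (a + 1) i) ×ˢ ACat (a + 1 + i) (n - i)).image
            fun p => p.1 ++ a :: p.2) := by
        ext w
        simp only [Finset.mem_biUnion, Finset.mem_range, Finset.mem_image, Finset.mem_product,
          mem_ACat, Prod.exists]
        constructor
        · rintro ⟨hp, hav⟩
          obtain ⟨i, hile, A, B, rfl, hlenA, hApe, hBpe, havA, havB⟩ := decomp hp hav
          exact ⟨i, by omega, A, B, ⟨⟨hApe, havA⟩, hBpe, havB⟩, rfl⟩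
        · rintro ⟨i, hi, A, B, ⟨⟨hApe, havA⟩, hBpe, havB⟩, rfl⟩
          constructor
          · have h1 : (A ++ a :: B).Perm (a :: (A ++ B)) := List.perm_middle
            refine h1.trans ?_
            rw [List.range'_succ]
            refine List.Perm.cons _ ?_
            have h2 : (A ++ B).Perm
                (List.range' (a + 1) i ++ List.range' (a + 1 + i) (n - i)) :=
              hApe.append hBpe
            refine h2.trans ?_
            have := List.range'_append (s := a + 1) (m := i) (n := n - i) (step := 1)
            simp only [one_mul] at this
            have he : a + 1 + 1 * i = a + 1 + i := by omega
            rw [this]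
            have : i + (n - i) = n := by omega
            rw [this]
          · refine avoids_join (p := i) ?_ ?_ havA havB
            · intro x hx
              have := List.mem_range'_1.mp (hApe.subset hx)
              omega
            · intro y hy
              have := List.mem_range'_1.mp (hBpe.subset hy)
              omega
      rw [hset]
      have hnotmemA : ∀ i (A : List ℕ), A.Perm (List.range' (a + 1) i) → a ∉ A := by
        intro i A hA ha
        have := List.mem_range'_1.mp (hA.subset ha)
        omega
      rw [Finset.card_biUnion]
      · have hterm : ∀ i ∈ Finset.range (n + 1),
            (((ACat (a + 1) i) ×ˢ ACat (a + 1 + i) (n - i)).image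
              (fun p => p.1 ++ a :: p.2)).card = catalan i * catalan (n - i) := by
          intro i hi
          rw [Finset.mem_range] at hi
          rw [Finset.card_image_of_injOn, Finset.card_product,
            ih i (by omega) (a + 1), ih (n - i) (by omega) (a + 1 + i)]
          rintro ⟨A₁, B₁⟩ h1 ⟨A₂, B₂⟩ h2 he
          simp only [Finset.mem_coe, Finset.mem_product, mem_ACat] at h1 h2
          simp only at he
          have := append_cons_inj (hnotmemA i A₁ h1.1.1) (hnotmemA i A₂ h2.1.1) he
          simp [Prod.ext_iff, this.1, this.2]
        rw [Finset.sum_congr rfl hterm]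
        rw [catalan_succ, Finset.sum_range]
      · intro i hi j hj hij
        rw [Finset.mem_coe, Finset.mem_range] at hi hj
        simp only [Function.onFun, Finset.disjoint_left, Finset.mem_image, Finset.mem_product, Prod.exists]
        rintro w ⟨A₁, B₁, ⟨hA1, _⟩, rfl⟩ ⟨A₂, B₂, ⟨hA2, _⟩, he⟩
        rw [mem_ACat] at hA1 hA2
        have := append_cons_inj (hnotmemA j A₂ hA2.1) (hnotmemA i A₁ hA1.1) he
        have hl1 := hA1.1.length_eq
        have hl2 := hA2.1.length_eq
        rw [this.1] at hl2
        simp only [List.length_range'] at hl1 hl2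
        omega

/-! ### Main theorem -/

/-- The number of 312-avoiding noncommutative crossing partitions of `[n]` is the
`n`-th Catalan number. -/
theorem nccp312_card (n : ℕ) :
    {π : List (List ℕ) | IsNCCP n π ∧ Avoids312 π.flatten}.ncard = catalan n := by
  classical
  have hinj : Function.Injective splitRuns :=
    Function.LeftInverse.injective (g := List.flatten) flatten_splitRuns
  have hset : {π : List (List ℕ) | IsNCCP n π ∧ Avoids312 π.flatten} =
      splitRuns '' ↑(ACat 1 n) := by
    ext π
    simp only [Set.mem_setOf_eq, Set.mem_image, Finset.mem_coe, mem_ACat]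
    constructor
    · rintro ⟨⟨hperm, hblocks, hchain⟩, hav⟩
      refine ⟨π.flatten, ⟨hperm, hav⟩, ?_⟩
      refine splitRuns_flatten_eq π ?_ hchain
      intro b hb
      obtain ⟨h1, h2⟩ := hblocks b hb
      exact ⟨h1, List.isChain_iff_pairwise.mpr h2⟩
    · rintro ⟨w, ⟨hperm, hav⟩, rfl⟩
      have hfl : (splitRuns w).flatten = w := flatten_splitRuns w
      refine ⟨⟨by rw [hfl]; exact hperm, ?_, ?_⟩, by rw [hfl]; exact hav⟩
      · intro b hb
        obtain ⟨h1, h2⟩ := splitRuns_blocks w b hb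
        exact ⟨h1, List.isChain_iff_pairwise.mp h2⟩
      · exact splitRuns_chain w (hperm.symm.nodup (List.nodup_range' (s := 1) (n := n)))
  rw [hset, Set.ncard_image_of_injective _ hinj, Set.ncard_coe_finset, ACat_card]
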